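/- Let 0 < a < 1 and a ≤ b ≤ 2a/(a+1), and define the density q_{a,b} : [0,1]² → ℝ by q_{a,b}(x,y) = (2a−b)/a² if 0 ≤ x,y ≤ a; q_{a,b}(x,y) = 1/a if 0 ≤ x ≤ a and a < y ≤ b; q_{a,b}(x,y) = 1/(1−b) if a < x ≤ b and b < y ≤ 1; q_{a,b}(x,y) = (b−a)/(a(1−b)) if b < x ≤ 1 and 0 ≤ y ≤ a; q_{a,b}(x,y) = (1+a−2b)/(1−b)² if b < x,y ≤ 1; and q_{a,b}(x,y) = 0 otherwise. Define Q_{a,b}(x,y) = ∫₀^x ∫₀^y q_{a,b}(s,t) dt ds. Then Q_{a,b} is a copula, Q_{a,b}(x,y) ≥ xy for all x,y ∈ [0,1], and Q_{a,b}(a,b) − Q_{a,b}(b,a) = b − a = min{a(1−b), (1−a)b, |a−b|}. -/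

import Mathlib

open MeasureTheory


/-- A (bivariate) copula: boundary conditions, values in [0,1], and 2-increasingness. -/
def IsCopula (C : ℝ → ℝ → ℝ) : Prop :=
  (∀ x ∈ Set.Icc (0:ℝ) 1, ∀ y ∈ Set.Icc (0:ℝ) 1, C x y ∈ Set.Icc (0:ℝ) 1) ∧
  (∀ x ∈ Set.Icc (0:ℝ) 1, C x 0 = 0 ∧ C 0 x = 0 ∧ C x 1 = x ∧ C 1 x = x) ∧
  (∀ x₁ x₂ y₁ y₂ : ℝ, 0 ≤ x₁ → x₁ ≤ x₂ → x₂ ≤ 1 → 0 ≤ y₁ → y₁ ≤ y₂ → y₂ ≤ 1 →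
    0 ≤ C x₂ y₂ - C x₂ y₁ - C x₁ y₂ + C x₁ y₁)

/-- The density `q_{a,b}` from Theorem 3.1 of the paper. -/
noncomputable def qab (a b : ℝ) : ℝ → ℝ → ℝ := fun x y =>
  if 0 ≤ x ∧ x ≤ a ∧ 0 ≤ y ∧ y ≤ a then (2 * a - b) / a ^ 2
  else if 0 ≤ x ∧ x ≤ a ∧ a < y ∧ y ≤ b then 1 / a
  else if a < x ∧ x ≤ b ∧ b < y ∧ y ≤ 1 then 1 / (1 - b)
  else if b < x ∧ x ≤ 1 ∧ 0 ≤ y ∧ y ≤ a then (b - a) / (a * (1 - b))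
  else if b < x ∧ x ≤ 1 ∧ b < y ∧ y ≤ 1 then (1 + a - 2 * b) / (1 - b) ^ 2
  else 0

/-- The absolutely continuous copula `Q_{a,b}` with density `q_{a,b}`. -/
noncomputable def Qab (a b : ℝ) : ℝ → ℝ → ℝ := fun x y =>
  ∫ s in (0:ℝ)..x, ∫ t in (0:ℝ)..y, qab a b s t

lemma ii_of_const_on {f : ℝ → ℝ} {u v c : ℝ} (huv : u ≤ v)
    (hf : ∀ t ∈ Set.Ioc u v, f t = c) : IntervalIntegrable f volume u v := by
  rw [intervalIntegrable_iff_integrableOn_Ioc_of_le huv]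
  exact (MeasureTheory.integrableOn_const (C := c) (by simp [Real.volume_Ioc])).congr_fun
    (fun t ht => (hf t ht).symm) measurableSet_Ioc

lemma int_of_const_on {f : ℝ → ℝ} {u v c : ℝ} (huv : u ≤ v)
    (hf : ∀ t ∈ Set.Ioc u v, f t = c) : ∫ t in u..v, f t = c * (v - u) := by
  rw [intervalIntegral.integral_of_le huv,
    MeasureTheory.setIntegral_congr_fun measurableSet_Ioc hf]
  simp [Real.volume_Ioc, ENNReal.toReal_ofReal (sub_nonneg.2 huv)]
  rw [max_eq_left (sub_nonneg.2 huv)]; ring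

lemma int_three {f : ℝ → ℝ} {p q r c1 c2 c3 : ℝ}
    (h0p : 0 ≤ p) (hpq : p ≤ q) (hqr : q ≤ r)
    (h1 : ∀ t ∈ Set.Ioc 0 p, f t = c1)
    (h2 : ∀ t ∈ Set.Ioc p q, f t = c2)
    (h3 : ∀ t ∈ Set.Ioc q r, f t = c3) :
    ∫ t in (0:ℝ)..r, f t = c1 * p + c2 * (q - p) + c3 * (r - q) := by
  have i1 := ii_of_const_on h0p h1
  have i2 := ii_of_const_on hpq h2
  have i3 := ii_of_const_on hqr h3
  rw [← intervalIntegral.integral_add_adjacent_intervals (i1.trans i2) i3,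
      ← intervalIntegral.integral_add_adjacent_intervals i1 i2,
      int_of_const_on h0p h1, int_of_const_on hpq h2, int_of_const_on hqr h3]
  ring

lemma inner1 {a b s y : ℝ} (ha0 : 0 < a) (hab : a ≤ b)
    (hs : s ∈ Set.Ioc 0 a) (hy : y ∈ Set.Icc (0:ℝ) 1) :
    ∫ t in (0:ℝ)..y, qab a b s t
      = (2*a-b)/a^2 * min y a + 1/a * (min y b - min y a) := by
  have h0ya : 0 ≤ min y a := le_min hy.1 ha0.le
  have hyab : min y a ≤ min y b := min_le_min le_rfl hab
  have hyb : min y b ≤ y := min_le_left _ _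
  have key := int_three (f := qab a b s) (c1 := (2*a-b)/a^2) (c2 := 1/a) (c3 := 0)
    h0ya hyab hyb
    (fun t ht => by
      have hta : t ≤ a := le_trans ht.2 (min_le_right _ _)
      simp only [qab]
      rw [if_pos ⟨hs.1.le, hs.2, ht.1.le, hta⟩])
    (fun t ht => by
      have hat : a < t := by
        by_contra h
        push_neg at h
        exact absurd (le_min (le_trans ht.2 (min_le_left _ _)) h) (not_le.2 ht.1)
      have htb : t ≤ b := le_trans ht.2 (min_le_right _ _)
      simp only [qab]
      rw [if_neg (fun h => absurd h.2.2.2 (not_le.2 hat)),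
          if_pos ⟨hs.1.le, hs.2, hat, htb⟩])
    (fun t ht => by
      have hbt : b < t := by
        by_contra h
        push_neg at h
        exact absurd (le_min ht.2 h) (not_le.2 ht.1)
      simp only [qab]
      rw [if_neg (fun h => absurd h.2.2.2 (not_le.2 (lt_of_le_of_lt hab hbt))),
          if_neg (fun h => absurd h.2.2.2 (not_le.2 hbt)),
          if_neg (fun h => absurd h.1 (not_lt.2 hs.2)),
          if_neg (fun h => absurd h.1 (not_lt.2 (le_trans hs.2 hab))),
          if_neg (fun h => absurd h.1 (not_lt.2 (le_trans hs.2 hab)))])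
  rw [key]; ring

lemma inner2 {a b s y : ℝ} (ha0 : 0 < a) (hab : a ≤ b)
    (hs : s ∈ Set.Ioc a b) (hy : y ∈ Set.Icc (0:ℝ) 1) :
    ∫ t in (0:ℝ)..y, qab a b s t = 1/(1-b) * (y - min y b) := by
  have h0yb : 0 ≤ min y b := le_min hy.1 (ha0.le.trans hab)
  have hyb : min y b ≤ y := min_le_left _ _
  have key := int_three (f := qab a b s) (c1 := 0) (c2 := 0) (c3 := 1/(1-b))
    h0yb le_rfl hyb
    (fun t ht => by
      have htb : t ≤ b := le_trans ht.2 (min_le_right _ _)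
      simp only [qab]
      rw [if_neg (fun h => absurd h.2.1 (not_le.2 hs.1)),
          if_neg (fun h => absurd h.2.1 (not_le.2 hs.1)),
          if_neg (fun h => absurd h.2.2.1 (not_lt.2 htb)),
          if_neg (fun h => absurd h.1 (not_lt.2 hs.2)),
          if_neg (fun h => absurd h.1 (not_lt.2 hs.2))])
    (fun t ht => absurd (ht.1.trans_le ht.2) (lt_irrefl _))
    (fun t ht => by
      have hbt : b < t := by
        by_contra h
        push_neg at h
        exact absurd (le_min ht.2 h) (not_le.2 ht.1)
      simp only [qab]
      rw [if_neg (fun h => absurd h.2.1 (not_le.2 hs.1)),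
          if_neg (fun h => absurd h.2.1 (not_le.2 hs.1)),
          if_pos ⟨hs.1, hs.2, hbt, ht.2.trans hy.2⟩])
  rw [key]; ring

lemma inner3 {a b s y : ℝ} (ha0 : 0 < a) (hab : a ≤ b)
    (hs : s ∈ Set.Ioc b 1) (hy : y ∈ Set.Icc (0:ℝ) 1) :
    ∫ t in (0:ℝ)..y, qab a b s t
      = (b-a)/(a*(1-b)) * min y a + (1+a-2*b)/(1-b)^2 * (y - min y b) := by
  have h0ya : 0 ≤ min y a := le_min hy.1 ha0.le
  have hyab : min y a ≤ min y b := min_le_min le_rfl hab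
  have hyb : min y b ≤ y := min_le_left _ _
  have has : a < s := lt_of_le_of_lt hab hs.1
  have key := int_three (f := qab a b s)
    (c1 := (b-a)/(a*(1-b))) (c2 := 0) (c3 := (1+a-2*b)/(1-b)^2)
    h0ya hyab hyb
    (fun t ht => by
      have hta : t ≤ a := le_trans ht.2 (min_le_right _ _)
      simp only [qab]
      rw [if_neg (fun h => absurd h.2.1 (not_le.2 has)),
          if_neg (fun h => absurd h.2.1 (not_le.2 has)),
          if_neg (fun h => absurd h.2.1 (not_le.2 hs.1)),
          if_pos ⟨hs.1, hs.2, ht.1.le, hta⟩])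
    (fun t ht => by
      have hat : a < t := by
        by_contra h
        push_neg at h
        exact absurd (le_min (le_trans ht.2 (min_le_left _ _)) h) (not_le.2 ht.1)
      have htb : t ≤ b := le_trans ht.2 (min_le_right _ _)
      simp only [qab]
      rw [if_neg (fun h => absurd h.2.2.2 (not_le.2 hat)),
          if_neg (fun h => absurd h.2.1 (not_le.2 has)),
          if_neg (fun h => absurd h.2.1 (not_le.2 hs.1)),
          if_neg (fun h => absurd h.2.2.2 (not_le.2 hat)),
          if_neg (fun h => absurd h.2.2.1 (not_lt.2 htb))])
    (fun t ht => by
      have hbt : b < t := by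
        by_contra h
        push_neg at h
        exact absurd (le_min ht.2 h) (not_le.2 ht.1)
      have hat : a < t := lt_of_le_of_lt hab hbt
      simp only [qab]
      rw [if_neg (fun h => absurd h.2.2.2 (not_le.2 hat)),
          if_neg (fun h => absurd h.2.1 (not_le.2 has)),
          if_neg (fun h => absurd h.2.1 (not_le.2 hs.1)),
          if_neg (fun h => absurd h.2.2.2 (not_le.2 hat)),
          if_pos ⟨hs.1, hs.2, hbt, ht.2.trans hy.2⟩])
  rw [key]; ring

noncomputable def Qcf (a b x y : ℝ) : ℝ :=
  (2*a - b)/a^2 * (min x a * min y a) + 1/a * (min x a * (min y b - min y a))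
  + 1/(1-b) * ((min x b - min x a) * (y - min y b))
  + (b-a)/(a*(1-b)) * ((x - min x b) * min y a)
  + (1+a-2*b)/(1-b)^2 * ((x - min x b) * (y - min y b))

lemma Qab_eq {a b x y : ℝ} (ha0 : 0 < a) (hab : a ≤ b)
    (hx : x ∈ Set.Icc (0:ℝ) 1) (hy : y ∈ Set.Icc (0:ℝ) 1) :
    Qab a b x y = Qcf a b x y := by
  have h0xa : 0 ≤ min x a := le_min hx.1 ha0.le
  have hxab : min x a ≤ min x b := min_le_min le_rfl hab
  have hxb : min x b ≤ x := min_le_left _ _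
  have key := int_three (f := fun s => ∫ t in (0:ℝ)..y, qab a b s t)
    (c1 := (2*a-b)/a^2 * min y a + 1/a * (min y b - min y a))
    (c2 := 1/(1-b) * (y - min y b))
    (c3 := (b-a)/(a*(1-b)) * min y a + (1+a-2*b)/(1-b)^2 * (y - min y b))
    h0xa hxab hxb
    (fun s hs =>
      inner1 ha0 hab ⟨hs.1, hs.2.trans (min_le_right _ _)⟩ hy)
    (fun s hs => by
      have has : a < s := by
        by_contra h
        push_neg at h
        exact absurd (le_min (hs.2.trans (min_le_left _ _)) h) (not_le.2 hs.1)
      exact inner2 ha0 hab ⟨has, hs.2.trans (min_le_right _ _)⟩ hy)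
    (fun s hs => by
      have hbs : b < s := by
        by_contra h
        push_neg at h
        exact absurd (le_min hs.2 h) (not_le.2 hs.1)
      exact inner3 ha0 hab ⟨hbs, hs.2.trans hx.2⟩ hy)
  show (∫ s in (0:ℝ)..x, ∫ t in (0:ℝ)..y, qab a b s t) = _
  rw [key, Qcf]
  ring

lemma A_mono {a x1 x2 : ℝ} (h : x1 ≤ x2) : min x1 a ≤ min x2 a := min_le_min h le_rfl

lemma B_mono {a b x1 x2 : ℝ} (hab : a ≤ b) (h : x1 ≤ x2) :
    min x1 b - min x1 a ≤ min x2 b - min x2 a := by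
  rcases le_total x2 a with h2 | h2
  · have h1 : x1 ≤ a := h.trans h2
    rw [min_eq_left h1, min_eq_left h2, min_eq_left (h1.trans hab), min_eq_left (h2.trans hab)]
    linarith
  · rw [min_eq_right h2]
    rcases le_total x1 a with h1 | h1
    · rw [min_eq_left h1, min_eq_left (h1.trans hab)]
      have : a ≤ min x2 b := le_min h2 hab
      linarith
    · rw [min_eq_right h1]
      have := min_le_min h (le_refl b)
      linarith

lemma C_mono {b x1 x2 : ℝ} (h : x1 ≤ x2) : x1 - min x1 b ≤ x2 - min x2 b := by
  rcases le_total x2 b with h2 | h2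
  · rw [min_eq_left h2, min_eq_left (h.trans h2)]
    linarith
  · rw [min_eq_right h2]
    rcases le_total x1 b with h1 | h1
    · rw [min_eq_left h1]; linarith
    · rw [min_eq_right h1]; linarith

lemma Qcf_rect (a b x1 x2 y1 y2 : ℝ) :
    Qcf a b x2 y2 - Qcf a b x2 y1 - Qcf a b x1 y2 + Qcf a b x1 y1
      = (2*a - b)/a^2 * ((min x2 a - min x1 a) * (min y2 a - min y1 a))
      + 1/a * ((min x2 a - min x1 a) * ((min y2 b - min y2 a) - (min y1 b - min y1 a)))
      + 1/(1-b) * (((min x2 b - min x2 a) - (min x1 b - min x1 a)) * ((y2 - min y2 b) - (y1 - min y1 b)))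
      + (b-a)/(a*(1-b)) * (((x2 - min x2 b) - (x1 - min x1 b)) * (min y2 a - min y1 a))
      + (1+a-2*b)/(1-b)^2 * (((x2 - min x2 b) - (x1 - min x1 b)) * ((y2 - min y2 b) - (y1 - min y1 b))) := by
  simp only [Qcf]; ring

lemma Qcf_rect_nonneg {a b : ℝ} (ha0 : 0 < a) (hab : a ≤ b) (hb1 : b < 1)
    (hb2a : b ≤ 2*a) (h1a2b : 2*b ≤ 1 + a)
    {x1 x2 y1 y2 : ℝ} (hx : x1 ≤ x2) (hy : y1 ≤ y2) :
    0 ≤ Qcf a b x2 y2 - Qcf a b x2 y1 - Qcf a b x1 y2 + Qcf a b x1 y1 := by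
  rw [Qcf_rect]
  have hAx := sub_nonneg.2 (A_mono (a := a) hx)
  have hAy := sub_nonneg.2 (A_mono (a := a) hy)
  have hBx := sub_nonneg.2 (B_mono hab hx)
  have hBy := sub_nonneg.2 (B_mono hab hy)
  have hCx := sub_nonneg.2 (C_mono (b := b) hx)
  have hCy := sub_nonneg.2 (C_mono (b := b) hy)
  have h1b : (0:ℝ) < 1 - b := by linarith
  have c1 : (0:ℝ) ≤ (2*a - b)/a^2 := div_nonneg (by linarith) (by positivity)
  have c2 : (0:ℝ) ≤ 1/a := by positivity
  have c3 : (0:ℝ) ≤ 1/(1-b) := by positivity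
  have c4 : (0:ℝ) ≤ (b-a)/(a*(1-b)) := by
    apply div_nonneg (by linarith) (by positivity)
  have c5 : (0:ℝ) ≤ (1+a-2*b)/(1-b)^2 := by
    apply div_nonneg (by linarith) (by positivity)
  have t1 := mul_nonneg c1 (mul_nonneg hAx hAy)
  have t2 := mul_nonneg c2 (mul_nonneg hAx hBy)
  have t3 := mul_nonneg c3 (mul_nonneg hBx hCy)
  have t4 := mul_nonneg c4 (mul_nonneg hCx hAy)
  have t5 := mul_nonneg c5 (mul_nonneg hCx hCy)
  linarith

lemma Qcf_zero_left {a b y : ℝ} (ha0 : 0 ≤ a) (hb0 : 0 ≤ b) : Qcf a b 0 y = 0 := by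
  rw [Qcf, min_eq_left ha0, min_eq_left hb0]; ring

lemma Qcf_zero_right {a b x : ℝ} (ha0 : 0 ≤ a) (hb0 : 0 ≤ b) : Qcf a b x 0 = 0 := by
  rw [Qcf, min_eq_left ha0, min_eq_left hb0]; ring

lemma Qcf_one_right {a b x : ℝ} (ha0 : 0 < a) (ha1 : a ≤ 1) (hb1 : b < 1) (hb1' : b ≤ 1) :
    Qcf a b x 1 = x := by
  rw [Qcf, min_eq_right ha1, min_eq_right hb1']
  have h1 : a ≠ 0 := ne_of_gt ha0
  have h2 : (1:ℝ) - b ≠ 0 := by linarith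
  field_simp
  ring

lemma Qcf_one_left {a b y : ℝ} (ha0 : 0 < a) (ha1 : a ≤ 1) (hb1 : b < 1) (hb1' : b ≤ 1) :
    Qcf a b 1 y = y := by
  rw [Qcf, min_eq_right ha1, min_eq_right hb1']
  have h1 : a ≠ 0 := ne_of_gt ha0
  have h2 : (1:ℝ) - b ≠ 0 := by linarith
  field_simp
  ring

lemma Qcf_mul {a b x y : ℝ} (ha0 : 0 < a) (hb1 : b < 1) :
    Qcf a b x y * (a^2 * (1-b)^2)
      = (2*a-b)*(1-b)^2 * (min x a * min y a)
      + a*(1-b)^2 * (min x a * (min y b - min y a))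
      + a^2*(1-b) * ((min x b - min x a) * (y - min y b))
      + a*(b-a)*(1-b) * ((x - min x b) * min y a)
      + a^2*(1+a-2*b) * ((x - min x b) * (y - min y b)) := by
  have h1 : a ≠ 0 := ne_of_gt ha0
  have h2 : (1:ℝ) - b ≠ 0 := by linarith
  rw [Qcf]
  field_simp

lemma Qcf_pqd {a b x y : ℝ} (ha0 : 0 < a) (ha1 : a < 1) (hab : a ≤ b) (hb1 : b < 1)
    (hb' : a*b + b ≤ 2*a) (h2ab : a^2 + b ≤ 2*a) (hba2 : b^2 ≤ a)
    (hx : x ∈ Set.Icc (0:ℝ) 1) (hy : y ∈ Set.Icc (0:ℝ) 1) :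
    x * y ≤ Qcf a b x y := by
  obtain ⟨hx0, hx1⟩ := hx
  obtain ⟨hy0, hy1⟩ := hy
  have h1b : (0:ℝ) < 1 - b := by linarith
  have hD : (0:ℝ) < a^2 * (1-b)^2 := by positivity
  rw [← mul_le_mul_iff_left₀ hD, Qcf_mul ha0 hb1]
  rcases le_or_gt x a with hxa | hxa <;> rcases le_or_gt y a with hya | hya
  · -- x ≤ a, y ≤ a
    rw [min_eq_left hxa, min_eq_left (hxa.trans hab), min_eq_left hya, min_eq_left (hya.trans hab)]
    nlinarith [mul_nonneg (mul_nonneg (by linarith : (0:ℝ) ≤ 2*a - b - a^2)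
      (mul_nonneg hx0 hy0)) (sq_nonneg (1-b))]
  · rcases le_or_gt y b with hyb | hyb
    · -- x ≤ a, a < y ≤ b
      rw [min_eq_left hxa, min_eq_left (hxa.trans hab), min_eq_right hya.le, min_eq_left hyb]
      nlinarith [mul_nonneg (mul_nonneg (mul_nonneg (mul_nonneg ha0.le (sq_nonneg (1-b)))
          hx0) (by linarith : (0:ℝ) ≤ y - a)) (by linarith : (0:ℝ) ≤ 1 - a),
        mul_nonneg (mul_nonneg (mul_nonneg ha0.le (sq_nonneg (1-b))) hx0)
          (by linarith : (0:ℝ) ≤ 2*a - a^2 - b)]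
    · -- x ≤ a, b < y
      rw [min_eq_left hxa, min_eq_left (hxa.trans hab), min_eq_right (hab.trans hyb.le),
        min_eq_right hyb.le]
      nlinarith [mul_nonneg (mul_nonneg (mul_nonneg (mul_pos (mul_pos ha0 ha0) h1b).le h1b.le)
        hx0) (by linarith : (0:ℝ) ≤ 1 - y)]
  · rcases le_or_gt x b with hxb | hxb
    · -- a < x ≤ b, y ≤ a
      rw [min_eq_right hxa.le, min_eq_left hxb, min_eq_left hya, min_eq_left (hya.trans hab)]
      nlinarith [mul_nonneg (mul_nonneg (mul_nonneg ha0.le (sq_nonneg (1-b))) hy0)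
          (by linarith : (0:ℝ) ≤ 2*a - b - a*b),
        mul_nonneg (mul_nonneg (mul_nonneg (mul_nonneg ha0.le (sq_nonneg (1-b))) hy0)
          ha0.le) (by linarith : (0:ℝ) ≤ b - x)]
    · -- b < x, y ≤ a
      rw [min_eq_right hxa.le, min_eq_right hxb.le, min_eq_left hya, min_eq_left (hya.trans hab)]
      nlinarith [mul_nonneg (mul_nonneg (mul_nonneg (mul_nonneg ha0.le h1b.le) hy0)
        (by linarith : (0:ℝ) ≤ 1 - x)) (by linarith : (0:ℝ) ≤ 2*a - b - a*b)]
  · rcases le_or_gt x b with hxb | hxb <;> rcases le_or_gt y b with hyb | hyb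
    · -- a < x ≤ b, a < y ≤ b
      rw [min_eq_right hxa.le, min_eq_left hxb, min_eq_right hya.le, min_eq_left hyb]
      nlinarith [mul_nonneg (mul_nonneg (mul_pos ha0 ha0).le (sq_nonneg (1-b)))
          (mul_nonneg hy0 (by linarith : (0:ℝ) ≤ b - x)),
        mul_nonneg (mul_nonneg (mul_pos ha0 ha0).le (sq_nonneg (1-b)))
          (mul_nonneg (by linarith : (0:ℝ) ≤ y - a) h1b.le),
        mul_nonneg (mul_nonneg (mul_pos ha0 ha0).le (sq_nonneg (1-b)))
          (by linarith : (0:ℝ) ≤ 2*a - b - a*b)]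
    · -- a < x ≤ b, b < y
      rw [min_eq_right hxa.le, min_eq_left hxb, min_eq_right (hab.trans hyb.le),
        min_eq_right hyb.le]
      nlinarith [mul_nonneg (mul_nonneg (mul_nonneg (mul_pos ha0 ha0).le h1b.le)
          (by linarith : (0:ℝ) ≤ 1 - y)) (by linarith : (0:ℝ) ≤ a - b^2),
        mul_nonneg (mul_nonneg (mul_nonneg (mul_nonneg (mul_pos ha0 ha0).le h1b.le)
          (by linarith : (0:ℝ) ≤ 1 - y)) (ha0.le.trans hab)) (by linarith : (0:ℝ) ≤ b - x)]
    · -- b < x, a < y ≤ b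
      rw [min_eq_right hxa.le, min_eq_right hxb.le, min_eq_right hya.le, min_eq_left hyb]
      nlinarith [mul_nonneg (mul_nonneg (mul_nonneg (mul_pos ha0 ha0).le
          (by linarith : (0:ℝ) ≤ 1 - x)) (mul_nonneg (mul_nonneg h1b.le h1b.le) h1b.le))
          (by linarith : (0:ℝ) ≤ y - a),
        mul_nonneg (mul_nonneg (mul_nonneg (mul_pos ha0 ha0).le
          (by linarith : (0:ℝ) ≤ 1 - x)) (sq_nonneg (1-b)))
          (by linarith : (0:ℝ) ≤ 2*a - b - a*b),
        h1b]
    · -- b < x, b < y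
      rw [min_eq_right hxa.le, min_eq_right hxb.le, min_eq_right (hab.trans hyb.le),
        min_eq_right hyb.le]
      nlinarith [mul_nonneg (mul_nonneg (mul_nonneg (mul_pos ha0 ha0).le
        (by linarith : (0:ℝ) ≤ a - b^2)) (by linarith : (0:ℝ) ≤ 1 - x))
        (by linarith : (0:ℝ) ≤ 1 - y)]

lemma Qcf_ab {a b : ℝ} (ha0 : 0 < a) (hab : a ≤ b) (hb1 : b < 1) :
    Qcf a b a b = a := by
  have e1 : min a b = a := min_eq_left hab
  have e2 : min b a = a := min_eq_right hab
  have h1 : a ≠ 0 := ne_of_gt ha0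
  simp only [Qcf, min_self, e1, e2]
  field_simp
  ring

lemma Qcf_ba {a b : ℝ} (ha0 : 0 < a) (hab : a ≤ b) (hb1 : b < 1) :
    Qcf a b b a = 2*a - b := by
  have e1 : min a b = a := min_eq_left hab
  have e2 : min b a = a := min_eq_right hab
  have h1 : a ≠ 0 := ne_of_gt ha0
  have h2 : (1:ℝ) - b ≠ 0 := by linarith
  have ha2 : a^2 ≠ 0 := pow_ne_zero 2 h1
  simp only [Qcf, min_self, e1, e2]
  rw [sub_self, sub_self]
  field_simp
  ring

theorem Qab_is_extremal_pqd_copula (a b : ℝ) (ha0 : 0 < a) (ha1 : a < 1)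
    (hab : a ≤ b) (hb : b ≤ 2 * a / (a + 1)) :
    IsCopula (Qab a b) ∧
    (∀ x ∈ Set.Icc (0:ℝ) 1, ∀ y ∈ Set.Icc (0:ℝ) 1, x * y ≤ Qab a b x y) ∧
    Qab a b a b - Qab a b b a = b - a ∧
    b - a = min (a * (1 - b)) (min ((1 - a) * b) |a - b|) := by
  have hb' : a*b + b ≤ 2*a := by
    have h := (le_div_iff₀ (show (0:ℝ) < a+1 by linarith)).1 hb
    nlinarith [h]
  have hb1 : b < 1 := by nlinarith [hb', ha0, ha1]
  have h2ab : a^2 + b ≤ 2*a := by nlinarith [hb', mul_le_mul_of_nonneg_left hab ha0.le]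
  have hb2a : b ≤ 2*a := by nlinarith [hb', mul_nonneg ha0.le (ha0.le.trans hab)]
  have h1a2b : 2*b ≤ 1 + a := by
    nlinarith [hb', sq_nonneg (1-a), (show (0:ℝ) < a+1 by linarith)]
  have hba2 : b^2 ≤ a := by
    have h0b1 : 0 ≤ b*(a+1) := mul_nonneg (ha0.le.trans hab) (by linarith)
    have key : (b*(a+1))*(b*(a+1)) ≤ (2*a)*(2*a) :=
      mul_self_le_mul_self h0b1 (by nlinarith [hb'])
    nlinarith [key, mul_nonneg ha0.le (sq_nonneg (1-a)), (show (0:ℝ) < (a+1)^2 by positivity)]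
  have h0I : (0:ℝ) ∈ Set.Icc (0:ℝ) 1 := ⟨le_rfl, zero_le_one⟩
  have h1I : (1:ℝ) ∈ Set.Icc (0:ℝ) 1 := ⟨zero_le_one, le_rfl⟩
  have haI : a ∈ Set.Icc (0:ℝ) 1 := ⟨ha0.le, ha1.le⟩
  have hbI : b ∈ Set.Icc (0:ℝ) 1 := ⟨ha0.le.trans hab, hb1.le⟩
  refine ⟨⟨?_, ?_, ?_⟩, ?_, ?_, ?_⟩
  · -- range
    intro x hx y hy
    rw [Qab_eq ha0 hab hx hy]
    constructor
    · exact le_trans (mul_nonneg hx.1 hy.1) (Qcf_pqd ha0 ha1 hab hb1 hb' h2ab hba2 hx hy)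
    · have rect := Qcf_rect_nonneg ha0 hab hb1 hb2a h1a2b hx.1 hy.2
      rw [Qcf_one_right ha0 ha1.le hb1 hb1.le, Qcf_zero_left ha0.le (ha0.le.trans hab),
        Qcf_zero_left ha0.le (ha0.le.trans hab)] at rect
      linarith [hx.2]
  · -- boundary
    intro x hx
    refine ⟨?_, ?_, ?_, ?_⟩
    · rw [Qab_eq ha0 hab hx h0I, Qcf_zero_right ha0.le (ha0.le.trans hab)]
    · rw [Qab_eq ha0 hab h0I hx, Qcf_zero_left ha0.le (ha0.le.trans hab)]
    · rw [Qab_eq ha0 hab hx h1I, Qcf_one_right ha0 ha1.le hb1 hb1.le]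
    · rw [Qab_eq ha0 hab h1I hx, Qcf_one_left ha0 ha1.le hb1 hb1.le]
  · -- 2-increasing
    intro x1 x2 y1 y2 h0x1 hx12 hx21 h0y1 hy12 hy21
    have hx1I : x1 ∈ Set.Icc (0:ℝ) 1 := ⟨h0x1, hx12.trans hx21⟩
    have hx2I : x2 ∈ Set.Icc (0:ℝ) 1 := ⟨h0x1.trans hx12, hx21⟩
    have hy1I : y1 ∈ Set.Icc (0:ℝ) 1 := ⟨h0y1, hy12.trans hy21⟩
    have hy2I : y2 ∈ Set.Icc (0:ℝ) 1 := ⟨h0y1.trans hy12, hy21⟩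
    rw [Qab_eq ha0 hab hx2I hy2I, Qab_eq ha0 hab hx2I hy1I,
      Qab_eq ha0 hab hx1I hy2I, Qab_eq ha0 hab hx1I hy1I]
    exact Qcf_rect_nonneg ha0 hab hb1 hb2a h1a2b hx12 hy12
  · -- PQD
    intro x hx y hy
    rw [Qab_eq ha0 hab hx hy]
    exact Qcf_pqd ha0 ha1 hab hb1 hb' h2ab hba2 hx hy
  · -- value
    rw [Qab_eq ha0 hab haI hbI, Qab_eq ha0 hab hbI haI,
      Qcf_ab ha0 hab hb1, Qcf_ba ha0 hab hb1]
    ring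
  · -- min
    have habs : |a - b| = b - a := by
      rw [abs_sub_comm, abs_of_nonneg (by linarith)]
    rw [habs, min_eq_right (show b - a ≤ (1-a)*b by nlinarith [mul_nonneg ha0.le (by linarith : (0:ℝ) ≤ 1 - b)]),
      min_eq_right (show b - a ≤ a*(1-b) by nlinarith [hb'])]
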